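/- Let D ⊊ ℝⁿ be a bounded domain with diameter d. With j'_D(x,y) = (1/2)·log((1 + |x−y|/δ(x))·(1 + |x−y|/δ(y))) and ζ'_D(x,y) = (1/2)·log((1 + d·|x−y|/η(x))·(1 + d·|x−y|/η(y))), we have j'_D(x,y) ≤ ζ'_D(x,y) ≤ 2·j'_D(x,y) for all x, y ∈ D. -/
import Mathlib


noncomputable def deltaD {n : ℕ} (D : Set (EuclideanSpace ℝ (Fin n)))
    (z : EuclideanSpace ℝ (Fin n)) : ℝ :=
  Metric.infDist z (frontier D)

noncomputable def etaD {n : ℕ} (D : Set (EuclideanSpace ℝ (Fin n)))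
    (z : EuclideanSpace ℝ (Fin n)) : ℝ :=
  deltaD D z * (Metric.diam D - deltaD D z)

noncomputable def zetaD {n : ℕ} (D : Set (EuclideanSpace ℝ (Fin n)))
    (x y : EuclideanSpace ℝ (Fin n)) : ℝ :=
  Real.log (1 + Metric.diam D * dist x y / min (etaD D x) (etaD D y))

noncomputable def zetaD' {n : ℕ} (D : Set (EuclideanSpace ℝ (Fin n)))
    (x y : EuclideanSpace ℝ (Fin n)) : ℝ :=
  (1 / 2) * Real.log ((1 + Metric.diam D * dist x y / etaD D x) *
    (1 + Metric.diam D * dist x y / etaD D y))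

noncomputable def jD' {n : ℕ} (D : Set (EuclideanSpace ℝ (Fin n)))
    (x y : EuclideanSpace ℝ (Fin n)) : ℝ :=
  (1 / 2) * Real.log ((1 + dist x y / deltaD D x) * (1 + dist x y / deltaD D y))

lemma delta_facts {n : ℕ} (hn : 2 ≤ n) {D : Set (EuclideanSpace ℝ (Fin n))}
    (hopen : IsOpen D) (hproper : D ≠ Set.univ) (hbdd : Bornology.IsBounded D)
    {z : EuclideanSpace ℝ (Fin n)} (hz : z ∈ D) :
    0 < deltaD D z ∧ 2 * deltaD D z ≤ Metric.diam D := by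
  obtain ⟨w, hw, hwd⟩ := exists_mem_frontier_infDist_compl_eq_dist hz hproper
  have hznf : z ∉ frontier D := by
    rw [hopen.frontier_eq]
    exact fun h => h.2 hz
  have hpos : 0 < deltaD D z :=
    (isClosed_frontier.notMem_iff_infDist_pos ⟨w, hw⟩).1 hznf
  refine ⟨hpos, ?_⟩
  -- ball z (deltaD D z) ⊆ D
  have hle : deltaD D z ≤ Metric.infDist z Dᶜ := by
    rw [hwd]
    exact Metric.infDist_le_dist_of_mem hw
  have hball : Metric.ball z (deltaD D z) ⊆ D :=
    (Metric.ball_subset_ball hle).trans Metric.ball_infDist_compl_subset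
  -- unit vector
  set e : EuclideanSpace ℝ (Fin n) := EuclideanSpace.single (⟨0, by omega⟩ : Fin n) (1 : ℝ)
  have he : ‖e‖ = 1 := by simp [e, EuclideanSpace.norm_single]
  have key : ∀ t : ℝ, 0 ≤ t → t < deltaD D z → 2 * t ≤ Metric.diam D := by
    intro t ht htδ
    have h1 : z + t • e ∈ D := by
      apply hball
      rw [Metric.mem_ball, dist_eq_norm]
      simp only [add_sub_cancel_left]
      rw [norm_smul, he]
      simpa [abs_of_nonneg ht] using htδ
    have h2 : z - t • e ∈ D := by
      apply hball
      rw [Metric.mem_ball, dist_eq_norm]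
      have : z - t • e - z = -(t • e) := by abel
      rw [this, norm_neg, norm_smul, he]
      simpa [abs_of_nonneg ht] using htδ
    have hd : dist (z + t • e) (z - t • e) = 2 * t := by
      rw [dist_eq_norm]
      have : z + t • e - (z - t • e) = (2 * t) • e := by
        rw [two_mul, add_smul]; abel
      rw [this, norm_smul, he, mul_one, Real.norm_eq_abs,
        abs_of_nonneg (by linarith)]
    calc 2 * t = dist (z + t • e) (z - t • e) := hd.symm
      _ ≤ Metric.diam D := Metric.dist_le_diam_of_mem hbdd h1 h2
  by_contra h
  push_neg at h
  set d := Metric.diam D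
  have hd0 : 0 ≤ d := Metric.diam_nonneg
  have := key ((d + 2 * deltaD D z) / 4) (by linarith) (by linarith)
  linarith

theorem stmt_10 {n : ℕ} (hn : 2 ≤ n) (D : Set (EuclideanSpace ℝ (Fin n)))
    (hopen : IsOpen D) (hconn : IsConnected D) (hproper : D ≠ Set.univ)
    (hbdd : Bornology.IsBounded D)
    (x y : EuclideanSpace ℝ (Fin n)) (hx : x ∈ D) (hy : y ∈ D) :
    jD' D x y ≤ zetaD' D x y ∧ zetaD' D x y ≤ 2 * jD' D x y := by
  obtain ⟨hδx, hdx⟩ := delta_facts hn hopen hproper hbdd hx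
  obtain ⟨hδy, hdy⟩ := delta_facts hn hopen hproper hbdd hy
  set d := Metric.diam D with hd
  set r := dist x y with hr
  have hr0 : 0 ≤ r := dist_nonneg
  have hηx : 0 < etaD D x := by
    unfold etaD; rw [← hd]; nlinarith
  have hηy : 0 < etaD D y := by
    unfold etaD; rw [← hd]; nlinarith
  -- generic bounds
  have main : ∀ z : EuclideanSpace ℝ (Fin n), z ∈ D → 0 < etaD D z →
      0 < deltaD D z → 2 * deltaD D z ≤ d →
      (1 + r / deltaD D z ≤ 1 + d * r / etaD D z ∧
       1 + d * r / etaD D z ≤ (1 + r / deltaD D z) ^ 2) := by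
    intro z _ hη hδ hd2
    set δ := deltaD D z
    have hη' : etaD D z = δ * (d - δ) := rfl
    constructor
    · have : r / δ ≤ d * r / etaD D z := by
        rw [div_le_div_iff₀ hδ hη, hη']
        nlinarith [mul_nonneg hr0 (mul_nonneg hδ.le hδ.le)]
      linarith
    · have h1 : d * r / etaD D z ≤ 2 * (r / δ) := by
        rw [hη', div_le_iff₀ (by nlinarith : (0:ℝ) < δ * (d - δ))]
        have : 2 * (r / δ) * (δ * (d - δ)) = 2 * r * (d - δ) * (δ / δ * 1) := by ring
        rw [this, div_self hδ.ne']
        nlinarith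
      have hu : 0 ≤ r / δ := div_nonneg hr0 hδ.le
      nlinarith
  obtain ⟨hx1, hx2⟩ := main x hx hηx hδx hdx
  obtain ⟨hy1, hy2⟩ := main y hy hηy hδy hdy
  have hBx : (0:ℝ) < 1 + r / deltaD D x := by positivity
  have hBy : (0:ℝ) < 1 + r / deltaD D y := by positivity
  have hAx : (0:ℝ) < 1 + d * r / etaD D x := lt_of_lt_of_le hBx hx1
  have hAy : (0:ℝ) < 1 + d * r / etaD D y := lt_of_lt_of_le hBy hy1
  unfold jD' zetaD'
  rw [← hd, ← hr]
  constructor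
  · have hlog : Real.log ((1 + r / deltaD D x) * (1 + r / deltaD D y)) ≤
        Real.log ((1 + d * r / etaD D x) * (1 + d * r / etaD D y)) := by
      apply Real.log_le_log (by positivity)
      exact mul_le_mul hx1 hy1 hBy.le hAx.le
    linarith
  · have hsq : (1 + d * r / etaD D x) * (1 + d * r / etaD D y) ≤
        ((1 + r / deltaD D x) * (1 + r / deltaD D y)) ^ 2 := by
      have : ((1 + r / deltaD D x) * (1 + r / deltaD D y)) ^ 2 =
          (1 + r / deltaD D x) ^ 2 * (1 + r / deltaD D y) ^ 2 := by ring
      rw [this]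
      exact mul_le_mul hx2 hy2 hAy.le (by positivity)
    have hlog : Real.log ((1 + d * r / etaD D x) * (1 + d * r / etaD D y)) ≤
        Real.log (((1 + r / deltaD D x) * (1 + r / deltaD D y)) ^ 2) := by
      apply Real.log_le_log (by positivity)
      exact hsq
    rw [Real.log_pow] at hlog
    push_cast at hlog
    linarith
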